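/- Soundness of bounded top-down grounding: for any bound structure 𝒜̂ for φ and 𝒜, the formula produced by the top-down grounding algorithm Gnd_𝒜̂(φ, ∅) is a grounding of φ over 𝒜̂: (1) if some total Tseitin strengthening of 𝒜̂ satisfies φ then some such structure satisfies Gnd_𝒜̂(φ,∅); and (2) every total Tseitin structure strengthening 𝒜̂ (with intended constants) satisfying Gnd_𝒜̂(φ,∅) satisfies φ. -/

import Mathlib

/-- Terms over domain `D`: variables (named by naturals) or constants `ã` for
domain elements `a ∈ D` (with the intended interpretation built in). -/
inductive Term (D : Type) where
  | var : ℕ → Term D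
  | const : D → Term D

/-- NNF first-order formulas over relational vocabulary `Rel` with arities `ar`:
atoms, negated atoms, conjunctions/disjunctions of arbitrary arity, quantifiers. -/
inductive Formula (D Rel : Type) (ar : Rel → ℕ) where
  | atom  : (r : Rel) → (Fin (ar r) → Term D) → Formula D Rel ar
  | natom : (r : Rel) → (Fin (ar r) → Term D) → Formula D Rel ar
  | conj  : List (Formula D Rel ar) → Formula D Rel ar
  | disj  : List (Formula D Rel ar) → Formula D Rel ar
  | all   : ℕ → Formula D Rel ar → Formula D Rel ar
  | ex    : ℕ → Formula D Rel ar → Formula D Rel ar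

variable {D Rel : Type} {ar : Rel → ℕ}

/-- Term evaluation: constants `ã` denote `a` (the intended interpretation). -/
def tval (ν : ℕ → D) : Term D → D
  | .var n => ν n
  | .const a => a

/-- Satisfaction in a total structure interpreting each relation symbol. -/
def eval (I : (r : Rel) → (Fin (ar r) → D) → Prop) :
    Formula D Rel ar → (ℕ → D) → Prop
  | .atom r args, ν => I r fun i => tval ν (args i)
  | .natom r args, ν => ¬ I r fun i => tval ν (args i)
  | .conj l, ν => ∀ ψ ∈ l.attach, eval I ψ.1 ν
  | .disj l, ν => ∃ ψ ∈ l.attach, eval I ψ.1 ν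
  | .all x ψ, ν => ∀ a : D, eval I ψ (Function.update ν x a)
  | .ex x ψ, ν => ∃ a : D, eval I ψ (Function.update ν x a)
decreasing_by all_goals first
  | (have h := List.sizeOf_lt_of_mem ψ.2; simp; omega)
  | simp

/-- Apply a substitution (partial map from variables to domain constants) to a term. -/
def stm (θ : ℕ → Option D) : Term D → Term D
  | .var n => match θ n with | some a => .const a | none => .var n
  | .const a => .const a

/-- Extend a substitution by binding variable `x` to domain element `a`. -/
def updOpt (θ : ℕ → Option D) (x : ℕ) (a : D) : ℕ → Option D :=
  fun n => if n = x then some a else θ n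

/-- Algorithm 1: the naive grounding `NaiveGnd_𝒜(φ, θ)`: atoms and negated atoms are
instantiated by `θ`, connectives are grounded componentwise, `∀x ψ` is replaced by
`⋀_{a∈A} ψ(ã)` and `∃x ψ` by `⋁_{a∈A} ψ(ã)`. -/
noncomputable def naiveGnd [Fintype D] (θ : ℕ → Option D) : Formula D Rel ar → Formula D Rel ar
  | .atom r args => .atom r fun i => stm θ (args i)
  | .natom r args => .natom r fun i => stm θ (args i)
  | .conj l => .conj (l.attach.map fun ψ => naiveGnd θ ψ.1)
  | .disj l => .disj (l.attach.map fun ψ => naiveGnd θ ψ.1)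
  | .all x ψ => .conj ((Finset.univ.toList (α := D)).map fun a => naiveGnd (updOpt θ x a) ψ)
  | .ex x ψ => .disj ((Finset.univ.toList (α := D)).map fun a => naiveGnd (updOpt θ x a) ψ)
decreasing_by all_goals first
  | (have h := List.sizeOf_lt_of_mem ψ.2; simp; omega)
  | simp

/-- The formula `⊤` (empty conjunction) or `⊥` (empty disjunction). -/
def ofB (b : Bool) : Formula D Rel ar := if b then .conj [] else .disj []

/-- Algorithm 2: top-down grounding over a bound structure `𝒜̂`, given by its
Tseitin part `hatT` (a three-valued interpretation of the Tseitin atom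
`⌈ψ⌉[θ]` for each subformula `ψ` and substitution `θ`) and its atom part `hatP`
(a three-valued interpretation of instantiated atoms).  `Eval` (the atom cases)
returns `⊤`/`⊥` for atoms decided by `𝒜̂` and the instantiated atom otherwise;
`Simpl` (inlined at each recursive call) returns `⊤`/`⊥` if `𝒜̂` decides the
Tseitin atom of the subformula instance and otherwise recurses via `Gnd`. -/
noncomputable def gnd [Fintype D]
    (hatT : Formula D Rel ar → (ℕ → Option D) → Option Bool)
    (hatP : (r : Rel) → (Fin (ar r) → Term D) → Option Bool) :
    Formula D Rel ar → (ℕ → Option D) → Formula D Rel ar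
  | .atom r args, θ =>
      match hatP r (fun i => stm θ (args i)) with
      | some b => ofB b
      | none => .atom r fun i => stm θ (args i)
  | .natom r args, θ =>
      match hatP r (fun i => stm θ (args i)) with
      | some b => ofB (!b)
      | none => .natom r fun i => stm θ (args i)
  | .conj l, θ => .conj (l.attach.map fun ψ =>
      match hatT ψ.1 θ with
      | some b => ofB b
      | none => gnd hatT hatP ψ.1 θ)
  | .disj l, θ => .disj (l.attach.map fun ψ =>
      match hatT ψ.1 θ with
      | some b => ofB b
      | none => gnd hatT hatP ψ.1 θ)
  | .all x ψ, θ => .conj ((Finset.univ.toList (α := D)).map fun a =>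
      match hatT ψ (updOpt θ x a) with
      | some b => ofB b
      | none => gnd hatT hatP ψ (updOpt θ x a))
  | .ex x ψ, θ => .disj ((Finset.univ.toList (α := D)).map fun a =>
      match hatT ψ (updOpt θ x a) with
      | some b => ofB b
      | none => gnd hatT hatP ψ (updOpt θ x a))
decreasing_by all_goals first
  | (have h := List.sizeOf_lt_of_mem ψ.2; simp; omega)
  | simp

/-- A total (Tseitin) structure, given by an interpretation `I` of all relation
symbols (the values of the Tseitin symbols are determined by `I`), strengthens
the bound structure `𝒜̂ = (hatT, hatP)`: wherever `𝒜̂` decides an atom or the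
Tseitin atom of a subformula instance, the corresponding truth value in `I`
agrees. -/
def strengthensHat
    (hatT : Formula D Rel ar → (ℕ → Option D) → Option Bool)
    (hatP : (r : Rel) → (Fin (ar r) → Term D) → Option Bool)
    (I : (r : Rel) → (Fin (ar r) → D) → Prop) : Prop :=
  (∀ (r : Rel) (t : Fin (ar r) → Term D) (b : Bool), hatP r t = some b →
    ∀ ν : ℕ → D, (I r (fun i => tval ν (t i)) ↔ b = true)) ∧
  (∀ (ψ : Formula D Rel ar) (θ : ℕ → Option D) (b : Bool), hatT ψ θ = some b →
    ∀ ν : ℕ → D, (eval I ψ (fun n => (θ n).getD (ν n)) ↔ b = true))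

/-- `I` is (the interpretation of) an expansion of the instance structure `𝒜`,
given by the interpretation `IA` of the instance relation symbols (those
satisfying `InstRel`). -/
def expansionOf (InstRel : Rel → Prop)
    (IA : (r : Rel) → (Fin (ar r) → D) → Prop)
    (I : (r : Rel) → (Fin (ar r) → D) → Prop) : Prop :=
  ∀ r : Rel, InstRel r → ∀ t : Fin (ar r) → D, (I r t ↔ IA r t)

/-- `𝒜̂ = (hatT, hatP)` is a bound structure for `φ` and `𝒜`: it strengthens `𝒜`
(it is defined, with the correct value, on every instance atom), and it is
conservative: every total structure which is an expansion of `𝒜` and satisfies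
`φ` strengthens `𝒜̂`. -/
def BoundHat (InstRel : Rel → Prop)
    (IA : (r : Rel) → (Fin (ar r) → D) → Prop)
    (φ : Formula D Rel ar)
    (hatT : Formula D Rel ar → (ℕ → Option D) → Option Bool)
    (hatP : (r : Rel) → (Fin (ar r) → Term D) → Option Bool) : Prop :=
  (∀ r : Rel, InstRel r → ∀ t : Fin (ar r) → D,
    ∃ b : Bool, hatP r (fun i => Term.const (t i)) = some b ∧ (b = true ↔ IA r t)) ∧
  (∀ I : (r : Rel) → (Fin (ar r) → D) → Prop, expansionOf InstRel IA I →
    (∀ ν : ℕ → D, eval I φ ν) → strengthensHat hatT hatP I)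

/-- soundness of bounded top-down grounding.  For any bound
structure `𝒜̂` for the NNF sentence `φ` and instance structure `𝒜`, the formula
`Gnd_𝒜̂(φ, ∅)` produced by the top-down algorithm is a grounding of `φ` over
`𝒜̂`: (1) if some total Tseitin strengthening of `𝒜̂` satisfies `φ` then some
such structure satisfies `Gnd_𝒜̂(φ, ∅)`; and (2) every total Tseitin structure
strengthening `𝒜̂` (with the intended interpretation of domain constants) that
satisfies `Gnd_𝒜̂(φ, ∅)` satisfies `φ`. -/
lemma eval_ofB (I : (r : Rel) → (Fin (ar r) → D) → Prop) (b : Bool) (ν : ℕ → D) :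
    eval I (ofB b : Formula D Rel ar) ν ↔ b = true := by
  cases b <;> simp [ofB, eval]

lemma tval_stm (θ : ℕ → Option D) (ν : ℕ → D) (t : Term D) :
    tval ν (stm θ t) = tval (fun n => (θ n).getD (ν n)) t := by
  cases t with
  | var n => cases h : θ n <;> simp [stm, tval, h]
  | const a => simp [stm, tval]

lemma merge_upd (θ : ℕ → Option D) (ν : ℕ → D) (x : ℕ) (a : D) :
    (fun n => (updOpt θ x a n).getD (ν n))
      = Function.update (fun n => (θ n).getD (ν n)) x a := by
  funext n
  by_cases h : n = x <;> simp [updOpt, Function.update, h]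

lemma simpl_iff [Fintype D]
    {hatT : Formula D Rel ar → (ℕ → Option D) → Option Bool}
    {hatP : (r : Rel) → (Fin (ar r) → Term D) → Option Bool}
    {I : (r : Rel) → (Fin (ar r) → D) → Prop}
    (hs : strengthensHat hatT hatP I)
    (ψ : Formula D Rel ar) (θ : ℕ → Option D) (ν : ℕ → D)
    (hrec : eval I (gnd hatT hatP ψ θ) ν ↔ eval I ψ (fun n => (θ n).getD (ν n))) :
    eval I (match hatT ψ θ with | some b => ofB b | none => gnd hatT hatP ψ θ) ν
      ↔ eval I ψ (fun n => (θ n).getD (ν n)) := by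
  cases hb : hatT ψ θ with
  | some b => rw [eval_ofB]; exact (hs.2 ψ θ b hb ν).symm
  | none => exact hrec

lemma gnd_eval [Fintype D]
    {hatT : Formula D Rel ar → (ℕ → Option D) → Option Bool}
    {hatP : (r : Rel) → (Fin (ar r) → Term D) → Option Bool}
    {I : (r : Rel) → (Fin (ar r) → D) → Prop}
    (hs : strengthensHat hatT hatP I)
    (ψ : Formula D Rel ar) (θ : ℕ → Option D) (ν : ℕ → D) :
    eval I (gnd hatT hatP ψ θ) ν ↔ eval I ψ (fun n => (θ n).getD (ν n)) := by
  induction ψ, θ using gnd.induct (hatP := hatP) generalizing ν with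
  | case1 r args θ b hb =>
      rw [gnd, hb]
      rw [eval_ofB]
      have := hs.1 r _ b hb ν
      simp only [tval_stm] at this
      rw [eval]
      exact this.symm
  | case2 r args θ hb =>
      rw [gnd, hb, eval, eval]
      simp only [tval_stm]
  | case3 r args θ b hb =>
      rw [gnd, hb]
      rw [eval_ofB]
      have := hs.1 r _ b hb ν
      simp only [tval_stm] at this
      rw [eval]
      cases b <;> simp_all
  | case4 r args θ hb =>
      rw [gnd, hb, eval, eval]
      simp only [tval_stm]
  | case5 l θ ih =>
      rw [gnd, eval, eval]
      constructor
      · intro h ψ _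
        have := h ⟨_, List.mem_map_of_mem (List.mem_attach _ ψ)⟩ (List.mem_attach _ _)
        exact (simpl_iff hs ψ.1 θ ν (ih ψ ν)).mp this
      · intro h χ _
        obtain ⟨ψ, -, hfe⟩ := List.mem_map.mp χ.2
        show eval I χ.1 ν
        rw [← hfe]
        exact (simpl_iff hs ψ.1 θ ν (ih ψ ν)).mpr (h ψ (List.mem_attach _ _))
  | case6 l θ ih =>
      rw [gnd, eval, eval]
      constructor
      · rintro ⟨χ, -, hev⟩
        obtain ⟨ψ, -, hfe⟩ := List.mem_map.mp χ.2
        rw [← hfe] at hev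
        exact ⟨ψ, List.mem_attach _ _, (simpl_iff hs ψ.1 θ ν (ih ψ ν)).mp hev⟩
      · rintro ⟨ψ, -, hev⟩
        exact ⟨⟨_, List.mem_map_of_mem (List.mem_attach _ ψ)⟩, List.mem_attach _ _,
          (simpl_iff hs ψ.1 θ ν (ih ψ ν)).mpr hev⟩
  | case7 x ψ θ ih =>
      rw [gnd, eval, eval]
      constructor
      · intro h a
        have ha : a ∈ Finset.univ.toList := by simp
        have := h ⟨_, List.mem_map_of_mem ha⟩ (List.mem_attach _ _)
        have := (simpl_iff hs ψ (updOpt θ x a) ν (ih a ν)).mp this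
        rwa [merge_upd] at this
      · intro h χ _
        obtain ⟨a, -, hfe⟩ := List.mem_map.mp χ.2
        show eval I χ.1 ν
        rw [← hfe]
        apply (simpl_iff hs ψ (updOpt θ x a) ν (ih a ν)).mpr
        rw [merge_upd]
        exact h a
  | case8 x ψ θ ih =>
      rw [gnd, eval, eval]
      constructor
      · rintro ⟨χ, -, hev⟩
        obtain ⟨a, -, hfe⟩ := List.mem_map.mp χ.2
        rw [← hfe] at hev
        have := (simpl_iff hs ψ (updOpt θ x a) ν (ih a ν)).mp hev
        rw [merge_upd] at this
        exact ⟨a, this⟩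
      · rintro ⟨a, hev⟩
        have ha : a ∈ Finset.univ.toList := by simp
        refine ⟨⟨_, List.mem_map_of_mem ha⟩, List.mem_attach _ _, ?_⟩
        apply (simpl_iff hs ψ (updOpt θ x a) ν (ih a ν)).mpr
        rw [merge_upd]
        exact hev

theorem gnd_sound [Fintype D]
    (InstRel : Rel → Prop)
    (IA : (r : Rel) → (Fin (ar r) → D) → Prop)
    (φ : Formula D Rel ar)
    (hatT : Formula D Rel ar → (ℕ → Option D) → Option Bool)
    (hatP : (r : Rel) → (Fin (ar r) → Term D) → Option Bool)
    (hbound : BoundHat InstRel IA φ hatT hatP) :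
    ((∃ I : (r : Rel) → (Fin (ar r) → D) → Prop,
        strengthensHat hatT hatP I ∧ ∀ ν : ℕ → D, eval I φ ν) →
      (∃ I : (r : Rel) → (Fin (ar r) → D) → Prop,
        strengthensHat hatT hatP I ∧
          ∀ ν : ℕ → D, eval I (gnd hatT hatP φ (fun _ => none)) ν)) ∧
    (∀ (I : (r : Rel) → (Fin (ar r) → D) → Prop) (ν : ℕ → D),
      strengthensHat hatT hatP I →
      eval I (gnd hatT hatP φ (fun _ => none)) ν → eval I φ ν) := by
  constructor
  · rintro ⟨I, hsI, hI⟩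
    refine ⟨I, hsI, fun ν => ?_⟩
    rw [gnd_eval hsI]
    exact hI _
  · intro I ν hsI hev
    rw [gnd_eval hsI] at hev
    simpa using hev
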